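/- The series ∑_{n≥0} (C(2n,n)/4^n)^3 equals Γ(1/4)^4 / (4π³). -/

import Mathlib

open Finset MeasureTheory intervalIntegral Set Filter

/- ### The sequence `rr k = (1/4)_k / k!` and its square `aa` -/

noncomputable def rr : ℕ → ℝ
  | 0 => 1
  | k+1 => rr k * ((4*k+1)/(4*k+4))

lemma rr_pos (k : ℕ) : 0 < rr k := by
  induction k with
  | zero => norm_num [rr]
  | succ k ih => rw [rr]; positivity

lemma rr_le_one (k : ℕ) : rr k ≤ 1 := by
  induction k with
  | zero => simp [rr]
  | succ k ih =>
      rw [rr]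
      have h : ((4*(k:ℝ)+1)/(4*(k:ℝ)+4)) ≤ 1 := by
        rw [div_le_one (by positivity)]; linarith
      calc rr k * ((4*(k:ℝ)+1)/(4*(k:ℝ)+4)) ≤ 1 * 1 :=
            mul_le_mul ih h (by positivity) (by norm_num)
        _ = 1 := by norm_num

noncomputable def aa (k : ℕ) : ℝ := rr k ^ 2

lemma aa_pos (k : ℕ) : 0 < aa k := pow_pos (rr_pos k) 2

lemma aa_zero : aa 0 = 1 := by norm_num [aa, rr]

lemma aa_succ (k : ℕ) : aa (k+1) = aa k * ((4*k+1)/(4*k+4))^2 := by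
  rw [aa, aa, rr, mul_pow]

/- ### Clausen's identity (finite form), via a Zeilberger certificate -/

noncomputable def B2 (n k : ℝ) : ℝ :=
  3 - 26*k + 64*k^2 - 32*k^3 + 27*n - 136*n*k + 112*n*k^2 + 72*n^2 - 128*n^2*k + 48*n^3

noncomputable def T (n k : ℕ) : ℝ :=
  -8*(k:ℝ)^2 * B2 n k * aa k * aa (n+1-k) / (4*((n:ℝ)+1-k) - 3)^2

lemma cert (k j : ℕ) :
    8*((k:ℝ)+j+1)^3 * (aa k * aa (j+1)) - (2*((k:ℝ)+j)+1)^3 * (aa k * aa j)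
      = T (k+j) (k+1) - T (k+j) k := by
  have e1 : (k+j) + 1 - (k+1) = j := by omega
  have e2 : (k+j) + 1 - k = j + 1 := by omega
  rw [T, T, e1, e2]
  have h1 : ((4*(j:ℝ)) - 3) ≠ 0 := by
    have : ((4*j : ℕ) : ℝ) ≠ 3 := by exact_mod_cast (by omega : 4*j ≠ 3)
    push_cast at this
    intro h; apply this; linarith
  have h2 : (4*(j:ℝ) + 1) ≠ 0 := by positivity
  have h3 : (4*(j:ℝ) + 4) ≠ 0 := by positivity
  have h4 : (4*(k:ℝ) + 4) ≠ 0 := by positivity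
  rw [aa_succ j, aa_succ k]
  have d1 : (4*(((k:ℝ)+j)+1-(k+1)) - 3) = 4*(j:ℝ) - 3 := by ring
  push_cast [d1]
  have d2 : (4*((k:ℝ)+(j:ℝ)+1-(k:ℝ)) - 3) = 4*(j:ℝ) + 1 := by ring
  rw [d2]
  have h1' : (4*(j:ℝ)-3)^2 ≠ 0 := pow_ne_zero 2 h1
  rw [div_sub_div _ _ h1' (pow_ne_zero 2 h2), eq_div_iff (mul_ne_zero h1' (pow_ne_zero 2 h2))]
  field_simp
  unfold B2
  ring

lemma T_zero (n : ℕ) : T n 0 = 0 := by simp [T]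

lemma T_top (n : ℕ) : T n (n+1) = -8*((n:ℝ)+1)^3 * aa (n+1) := by
  rw [T]
  have e1 : n + 1 - (n+1) = 0 := by omega
  rw [e1, aa_zero]
  have d : (4*((n:ℝ)+1-(n+1):ℝ) - 3) = -3 := by push_cast; ring
  push_cast [d]
  rw [B2]
  field_simp
  ring

lemma Srec (n : ℕ) :
    8*((n:ℝ)+1)^3 * ∑ k ∈ range (n+2), aa k * aa (n+1-k)
      = (2*(n:ℝ)+1)^3 * ∑ k ∈ range (n+1), aa k * aa (n-k) := by
  have key : ∑ k ∈ range (n+1),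
      (8*((n:ℝ)+1)^3 * (aa k * aa (n+1-k)) - (2*(n:ℝ)+1)^3 * (aa k * aa (n-k)))
      = T n (n+1) - T n 0 := by
    rw [← Finset.sum_range_sub (f := T n) (n := n+1)]
    apply Finset.sum_congr rfl
    intro k hk
    rw [Finset.mem_range] at hk
    have hkn : k ≤ n := by omega
    have e1 : n + 1 - k = (n - k) + 1 := by omega
    have e2 : k + (n - k) = n := by omega
    have := cert k (n - k)
    rw [e2] at this
    have ec : ((k:ℝ) + ((n-k:ℕ):ℝ) + 1) = (n:ℝ) + 1 := by
      have : ((n-k:ℕ):ℝ) = (n:ℝ) - (k:ℝ) := by rw [Nat.cast_sub hkn]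
      rw [this]; ring
    have ec2 : (2*((k:ℝ) + ((n-k:ℕ):ℝ)) + 1) = 2*(n:ℝ) + 1 := by
      have : ((n-k:ℕ):ℝ) = (n:ℝ) - (k:ℝ) := by rw [Nat.cast_sub hkn]
      rw [this]; ring
    rw [ec, ec2] at this
    rw [e1, this]
  rw [Finset.sum_sub_distrib, ← Finset.mul_sum, ← Finset.mul_sum] at key
  rw [T_zero, T_top] at key
  rw [Finset.sum_range_succ (f := fun k => aa k * aa (n+1-k)) (n := n+1)]
  have e3 : n + 1 - (n+1) = 0 := by omega
  rw [e3, aa_zero]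
  linarith [key]

noncomputable def cb (n : ℕ) : ℝ := (Nat.centralBinom n : ℝ) / 4^n

lemma cb_zero : cb 0 = 1 := by simp [cb, Nat.centralBinom]

lemma cb_rec (n : ℕ) : 2*((n:ℝ)+1) * cb (n+1) = (2*(n:ℝ)+1) * cb n := by
  have h := Nat.succ_mul_centralBinom_succ n
  have h' : ((n+1) * Nat.centralBinom (n+1) : ℝ) = (2 * (2*n+1) * Nat.centralBinom n : ℝ) := by
    exact_mod_cast congrArg (Nat.cast : ℕ → ℝ) h
  push_cast at h'
  rw [cb, cb]
  have h4 : (4:ℝ)^(n+1) = 4 * 4^n := by ring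
  rw [h4]
  field_simp
  nlinarith [h', pow_pos (show (0:ℝ) < 4 by norm_num) n]

lemma clausen (n : ℕ) :
    ∑ k ∈ range (n+1), aa k * aa (n-k) = cb n ^ 3 := by
  induction n with
  | zero => simp [aa_zero, cb_zero]
  | succ n ih =>
      have h8 : (8:ℝ)*((n:ℝ)+1)^3 ≠ 0 := by positivity
      have hS := Srec n
      rw [ih] at hS
      have hc := cb_rec n
      have hgoal : 8*((n:ℝ)+1)^3 * ∑ k ∈ range (n+2), aa k * aa (n+1-k)
          = 8*((n:ℝ)+1)^3 * cb (n+1)^3 := by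
        rw [hS]
        have hcc : (2*((n:ℝ)+1) * cb (n+1))^3 = ((2*(n:ℝ)+1) * cb n)^3 := by rw [hc]
        linear_combination -hcc
      exact mul_left_cancel₀ h8 hgoal

/- ### Summability of `aa` -/

lemma key_poly (k : ℕ) : ((4*(k:ℝ)+1)^8*((k:ℝ)+2)^5 ≤ (4*(k:ℝ)+4)^8*((k:ℝ)+1)^5) := by
  nlinarith [pow_nonneg (Nat.cast_nonneg (α := ℝ) k) 12, pow_nonneg (Nat.cast_nonneg (α := ℝ) k) 11,
    pow_nonneg (Nat.cast_nonneg (α := ℝ) k) 10, pow_nonneg (Nat.cast_nonneg (α := ℝ) k) 9,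
    pow_nonneg (Nat.cast_nonneg (α := ℝ) k) 8, pow_nonneg (Nat.cast_nonneg (α := ℝ) k) 7,
    pow_nonneg (Nat.cast_nonneg (α := ℝ) k) 6, pow_nonneg (Nat.cast_nonneg (α := ℝ) k) 5,
    pow_nonneg (Nat.cast_nonneg (α := ℝ) k) 4, pow_nonneg (Nat.cast_nonneg (α := ℝ) k) 3,
    pow_nonneg (Nat.cast_nonneg (α := ℝ) k) 2, Nat.cast_nonneg (α := ℝ) k]

lemma aa_pow4 (k : ℕ) : aa k ^ 4 * ((k:ℝ)+1)^5 ≤ 1 := by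
  induction k with
  | zero => simp [aa_zero]
  | succ k ih =>
      rw [aa_succ]
      have hq8 : ((4*(k:ℝ)+1)/(4*(k:ℝ)+4))^8 * ((k:ℝ)+2)^5 ≤ ((k:ℝ)+1)^5 := by
        rw [div_pow, div_mul_eq_mul_div, div_le_iff₀ (by positivity)]
        linarith [key_poly k]
      push_cast
      calc (aa k * ((4*(k:ℝ)+1)/(4*(k:ℝ)+4))^2)^4 * ((k:ℝ)+1+1)^5
          = aa k^4 * (((4*(k:ℝ)+1)/(4*(k:ℝ)+4))^8 * ((k:ℝ)+2)^5) := by ring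
        _ ≤ aa k^4 * ((k:ℝ)+1)^5 := mul_le_mul_of_nonneg_left hq8 (by positivity)
        _ ≤ 1 := ih

lemma aa_le (k : ℕ) : aa k ≤ ((k:ℝ)+1) ^ (-(5/4) : ℝ) := by
  have hk1 : (0:ℝ) < (k:ℝ)+1 := by positivity
  have h4 : aa k ^ (4:ℕ) ≤ (((k:ℝ)+1) ^ (-(5/4) : ℝ)) ^ (4:ℕ) := by
    rw [← Real.rpow_natCast (((k:ℝ)+1) ^ (-(5/4) : ℝ)) 4, ← Real.rpow_mul hk1.le]
    norm_num
    rw [← one_div]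
    rw [le_div_iff₀ (by positivity)]
    exact aa_pow4 k
  exact le_of_pow_le_pow_left₀ (by norm_num) (by positivity) h4

lemma summable_aa : Summable aa := by
  apply Summable.of_nonneg_of_le (fun k => (aa_pos k).le) aa_le
  have h : Summable (fun n : ℕ => ((n:ℝ)) ^ (-(5/4) : ℝ)) := by
    rw [Real.summable_nat_rpow]; norm_num
  have := (summable_nat_add_iff 1).2 h
  simpa using this

/- ### The real Beta integral -/

lemma cpow_real_eq {x s : ℝ} (hx : 0 ≤ x) : ((x:ℂ)) ^ ((s:ℂ) - 1) = ((x ^ (s-1) : ℝ) : ℂ) := by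
  rw [show ((s:ℂ) - 1) = ((s-1:ℝ):ℂ) by push_cast; ring, ← Complex.ofReal_cpow hx]

lemma realBeta_integrable {s t : ℝ} (hs : 0 < s) (ht : 0 < t) :
    IntervalIntegrable (fun x : ℝ => x^(s-1) * (1-x)^(t-1)) volume 0 1 := by
  have h := Complex.betaIntegral_convergent (u := (s:ℂ)) (v := (t:ℂ)) (by simpa) (by simpa)
  constructor
  · have hre : IntegrableOn
        (fun x : ℝ => RCLike.re ((x:ℂ) ^ ((s:ℂ) - 1) * (1 - (x:ℂ)) ^ ((t:ℂ) - 1)))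
        (Ioc 0 1) volume := h.1.re
    apply hre.congr_fun ?_ measurableSet_Ioc
    intro x hx
    obtain ⟨hx0, hx1⟩ := hx
    simp only
    rw [cpow_real_eq hx0.le, show (1 - (x:ℂ)) = ((1-x:ℝ):ℂ) by push_cast; ring,
      cpow_real_eq (by linarith : (0:ℝ) ≤ 1 - x)]
    rw [← Complex.ofReal_mul]
    simp
  · rw [Set.Ioc_eq_empty (by norm_num)]
    exact integrableOn_empty

lemma realBeta {s t : ℝ} (hs : 0 < s) (ht : 0 < t) :
    ∫ x in (0:ℝ)..1, x^(s-1) * (1-x)^(t-1)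
      = Real.Gamma s * Real.Gamma t / Real.Gamma (s+t) := by
  have key := Complex.Gamma_mul_Gamma_eq_betaIntegral (s := (s:ℂ)) (t := (t:ℂ)) (by simpa) (by simpa)
  have hbeta : Complex.betaIntegral (s:ℂ) (t:ℂ)
      = ((∫ x in (0:ℝ)..1, x^(s-1) * (1-x)^(t-1) : ℝ) : ℂ) := by
    rw [Complex.betaIntegral, ← intervalIntegral.integral_ofReal]
    apply intervalIntegral.integral_congr
    intro x hx
    rw [Set.uIcc_of_le (by norm_num : (0:ℝ) ≤ 1)] at hx
    obtain ⟨hx0, hx1⟩ := hx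
    simp only
    rw [cpow_real_eq hx0, show (1 - (x:ℂ)) = ((1-x:ℝ):ℂ) by push_cast; ring,
      cpow_real_eq (by linarith : (0:ℝ) ≤ 1 - x)]
    push_cast
    ring
  rw [hbeta, Complex.Gamma_ofReal, Complex.Gamma_ofReal, ← Complex.ofReal_add,
    Complex.Gamma_ofReal] at key
  have hg : Real.Gamma (s+t) ≠ 0 := (Real.Gamma_pos_of_pos (by linarith)).ne'
  have h2 : Real.Gamma s * Real.Gamma t
      = Real.Gamma (s+t) * ∫ x in (0:ℝ)..1, x^(s-1) * (1-x)^(t-1) := by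
    exact_mod_cast key
  rw [h2]; field_simp

/- ### The binomial series for `(1-t)^(-1/4)` -/

lemma ibp (M : ℕ) {t : ℝ} (ht0 : 0 ≤ t) (ht1 : t < 1) :
    ∫ s in (0:ℝ)..t, (((M:ℝ)+1) * s^M - ((M:ℝ)+5/4) * s^(M+1)) * (1-s)^(-(3/4):ℝ)
      = t^(M+1) * (1-t)^((1/4):ℝ) := by
  have hderiv : ∀ s ∈ Set.uIcc (0:ℝ) t,
      HasDerivAt (fun s : ℝ => s^(M+1) * (1-s)^((1/4):ℝ))
        ((((M:ℝ)+1) * s^M - ((M:ℝ)+5/4) * s^(M+1)) * (1-s)^(-(3/4):ℝ)) s := by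
    intro s hs
    rw [Set.uIcc_of_le ht0] at hs
    obtain ⟨hs0, hs1⟩ := hs
    have h1s : 0 < 1 - s := by linarith
    have hpow : HasDerivAt (fun s : ℝ => s^(M+1)) (((M:ℝ)+1) * s^M) s := by
      simpa using (hasDerivAt_pow (M+1) s)
    have hrpow : HasDerivAt (fun s : ℝ => (1-s)^((1/4):ℝ))
        (-(1/4) * (1-s)^(-(3/4):ℝ)) s := by
      have hbase : HasDerivAt (fun s : ℝ => 1 - s) (-1) s := by
        simpa using ((hasDerivAt_id s).const_sub 1)
      have := (Real.hasDerivAt_rpow_const (x := 1-s) (p := (1/4:ℝ)) (Or.inl h1s.ne')).comp s hbase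
      exact this.congr_deriv (by norm_num)
    have := hpow.mul hrpow
    refine this.congr_deriv ?_
    have hsplit : (1-s)^((1/4):ℝ) = (1-s) * (1-s)^(-(3/4):ℝ) := by
      rw [← Real.rpow_one_add' h1s.le (by norm_num)]
      norm_num
    rw [hsplit]
    ring
  have hint : IntervalIntegrable
      (fun s : ℝ => (((M:ℝ)+1) * s^M - ((M:ℝ)+5/4) * s^(M+1)) * (1-s)^(-(3/4):ℝ))
      volume 0 t := by
    apply ContinuousOn.intervalIntegrable
    apply ContinuousOn.mul
    · fun_prop
    · apply ContinuousOn.rpow_const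
      · fun_prop
      · intro s hs
        rw [Set.uIcc_of_le ht0] at hs
        left
        have h : (1:ℝ) - s > 0 := by linarith [hs.2]
        exact fun hc => absurd (hc ▸ h) (by norm_num)
  have := intervalIntegral.integral_eq_sub_of_hasDerivAt hderiv hint
  rw [this]
  norm_num

lemma intgr (M : ℕ) {t : ℝ} (ht0 : 0 ≤ t) (ht1 : t < 1) :
    IntervalIntegrable (fun s : ℝ => s^M * (1-s)^(-(3/4):ℝ)) volume 0 t := by
  apply ContinuousOn.intervalIntegrable
  apply ContinuousOn.mul
  · fun_prop
  · apply ContinuousOn.rpow_const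
    · fun_prop
    · intro s hs
      rw [Set.uIcc_of_le ht0] at hs
      left
      have h : (1:ℝ) - s > 0 := by linarith [hs.2]
      exact fun hc => absurd (hc ▸ h) (by norm_num)

lemma base_ftc {t : ℝ} (ht0 : 0 ≤ t) (ht1 : t < 1) :
    ∫ s in (0:ℝ)..t, (1/4) * ((1-s)^(-(3/4):ℝ)) = 1 - (1-t)^((1/4):ℝ) := by
  have hderiv : ∀ s ∈ Set.uIcc (0:ℝ) t,
      HasDerivAt (fun s : ℝ => 1 - (1-s)^((1/4):ℝ)) ((1/4) * ((1-s)^(-(3/4):ℝ))) s := by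
    intro s hs
    rw [Set.uIcc_of_le ht0] at hs
    have h1s : 0 < 1 - s := by linarith [hs.2]
    have hbase : HasDerivAt (fun s : ℝ => 1 - s) (-1) s := by
      simpa using ((hasDerivAt_id s).const_sub 1)
    have h := ((Real.hasDerivAt_rpow_const (x := 1-s) (p := (1/4:ℝ))
      (Or.inl h1s.ne')).comp s hbase).const_sub 1
    exact h.congr_deriv (by norm_num)
  have hint : IntervalIntegrable (fun s : ℝ => (1/4) * ((1-s)^(-(3/4):ℝ))) volume 0 t := by
    have := (intgr 0 ht0 ht1).const_mul (1/4)
    simpa using this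
  have := intervalIntegral.integral_eq_sub_of_hasDerivAt hderiv hint
  rw [this]
  norm_num

lemma remainder (N : ℕ) {t : ℝ} (ht0 : 0 ≤ t) (ht1 : t < 1) :
    1 - (1-t)^((1/4):ℝ) * (∑ k ∈ range (N+1), rr k * t^k)
      = (((N:ℝ)+1/4) * rr N) * ∫ s in (0:ℝ)..t, s^N * (1-s)^(-(3/4):ℝ) := by
  induction N with
  | zero =>
      have hs : (∑ k ∈ range (0+1), rr k * t^k) = 1 := by simp [rr]
      rw [hs, mul_one, ← base_ftc ht0 ht1,
        show ((0:ℕ):ℝ)+1/4 = 1/4 by norm_num,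
        show rr 0 = 1 from rfl, mul_one, ← intervalIntegral.integral_const_mul]
      apply intervalIntegral.integral_congr
      intro s _
      norm_num
  | succ N ih =>
      rw [Finset.sum_range_succ]
      have hIBP := ibp N ht0 ht1
      have hsplit : ∫ s in (0:ℝ)..t, (((N:ℝ)+1) * s^N - ((N:ℝ)+5/4) * s^(N+1)) * (1-s)^(-(3/4):ℝ)
          = ((N:ℝ)+1) * (∫ s in (0:ℝ)..t, s^N * (1-s)^(-(3/4):ℝ))
            - ((N:ℝ)+5/4) * (∫ s in (0:ℝ)..t, s^(N+1) * (1-s)^(-(3/4):ℝ)) := by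
        rw [← intervalIntegral.integral_const_mul, ← intervalIntegral.integral_const_mul,
          ← intervalIntegral.integral_sub (((intgr N ht0 ht1).const_mul _))
            (((intgr (N+1) ht0 ht1).const_mul _))]
        apply intervalIntegral.integral_congr
        intro s _
        simp only
        ring
      rw [hsplit] at hIBP
      have hrrsucc : rr (N+1) = rr N * ((4*(N:ℝ)+1)/(4*(N:ℝ)+4)) := by
        rw [rr]
      have hcoef : ((N:ℝ)+1) * rr (N+1) = ((N:ℝ)+1/4) * rr N := by
        rw [hrrsucc]
        have h4 : (4*(N:ℝ)+4) ≠ 0 := by positivity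
        field_simp
      have expand : 1 - (1-t)^((1/4):ℝ) * ((∑ k ∈ range (N+1), rr k * t^k) + rr (N+1) * t^(N+1))
          = (1 - (1-t)^((1/4):ℝ) * (∑ k ∈ range (N+1), rr k * t^k))
            - rr (N+1) * (t^(N+1) * (1-t)^((1/4):ℝ)) := by ring
      rw [expand, ih, ← hIBP]
      push_cast
      linear_combination (((N:ℝ)+1/4) * rr N - ((N:ℝ)+1) * rr (N+1)) *
        (∫ s in (0:ℝ)..t, s^N * (1-s)^(-(3/4):ℝ))
        - hcoef * (∫ s in (0:ℝ)..t, s^N * (1-s)^(-(3/4):ℝ))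

lemma binom_hasSum {t : ℝ} (ht0 : 0 ≤ t) (ht1 : t < 1) :
    HasSum (fun k => rr k * t^k) ((1-t)^(-(1/4):ℝ)) := by
  have h1t : (0:ℝ) < 1 - t := by linarith
  have hsummable : Summable (fun k => rr k * t^k) := by
    apply Summable.of_nonneg_of_le (fun k => mul_nonneg (rr_pos k).le (pow_nonneg ht0 k))
      (fun k => ?_) (summable_geometric_of_lt_one ht0 ht1)
    calc rr k * t^k ≤ 1 * t^k :=
          mul_le_mul_of_nonneg_right (rr_le_one k) (by positivity)
      _ = t^k := one_mul _
  have hL := hsummable.hasSum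
  set L := ∑' k, rr k * t^k with hLdef
  have hbound : ∀ N : ℕ, |1 - (1-t)^((1/4):ℝ) * (∑ k ∈ range (N+1), rr k * t^k)|
      ≤ ((N:ℝ)+1) * t^N * ((1-t)^(-(3/4):ℝ)) := by
    intro N
    rw [remainder N ht0 ht1]
    have hIb : ‖∫ s in (0:ℝ)..t, s^N * (1-s)^(-(3/4):ℝ)‖
        ≤ t^N * (1-t)^(-(3/4):ℝ) * |t - 0| := by
      apply intervalIntegral.norm_integral_le_of_norm_le_const
      intro s hs
      rw [Set.uIoc_of_le ht0] at hs
      obtain ⟨hs0, hs1⟩ := hs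
      have h1s : 0 < 1 - s := by linarith
      rw [Real.norm_eq_abs, abs_of_nonneg (by positivity)]
      apply mul_le_mul
      · exact pow_le_pow_left₀ hs0.le hs1 N
      · rw [Real.rpow_neg h1s.le, Real.rpow_neg h1t.le]
        apply inv_anti₀ (by positivity)
        exact Real.rpow_le_rpow h1t.le (by linarith) (by norm_num)
      · positivity
      · positivity
    rw [abs_mul]
    have h1 : |((N:ℝ)+1/4) * rr N| ≤ (N:ℝ)+1 := by
      rw [abs_of_nonneg (mul_nonneg (by positivity) (rr_pos N).le)]
      calc ((N:ℝ)+1/4) * rr N ≤ ((N:ℝ)+1/4) * 1 :=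
            mul_le_mul_of_nonneg_left (rr_le_one N) (by positivity)
        _ ≤ (N:ℝ)+1 := by linarith
    calc |((N:ℝ)+1/4) * rr N| * |∫ s in (0:ℝ)..t, s^N * (1-s)^(-(3/4):ℝ)|
        ≤ ((N:ℝ)+1) * (t^N * (1-t)^(-(3/4):ℝ) * |t - 0|) := by
          apply mul_le_mul h1 _ (abs_nonneg _) (by positivity)
          rw [← Real.norm_eq_abs]
          exact hIb
      _ ≤ ((N:ℝ)+1) * t^N * ((1-t)^(-(3/4):ℝ)) := by
          rw [sub_zero, abs_of_nonneg ht0]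
          have : t^N * (1-t)^(-(3/4):ℝ) * t ≤ t^N * (1-t)^(-(3/4):ℝ) * 1 :=
            mul_le_mul_of_nonneg_left ht1.le (by positivity)
          nlinarith [pow_nonneg ht0 N, Real.rpow_nonneg h1t.le (-(3/4):ℝ)]
  have hb0 : Tendsto (fun N : ℕ => ((N:ℝ)+1) * t^N * ((1-t)^(-(3/4):ℝ))) atTop (nhds 0) := by
    have h1 : Tendsto (fun N : ℕ => ((N:ℝ)+1) * t^N) atTop (nhds 0) := by
      have ha := tendsto_self_mul_const_pow_of_lt_one ht0 ht1
      have hb := tendsto_pow_atTop_nhds_zero_of_lt_one ht0 ht1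
      have := ha.add hb
      simpa [add_mul] using this
    have := h1.mul_const ((1-t)^(-(3/4):ℝ))
    simpa using this
  have hps : Tendsto (fun N : ℕ => (1-t)^((1/4):ℝ) * (∑ k ∈ range (N+1), rr k * t^k))
      atTop (nhds 1) := by
    have h0 : Tendsto (fun N : ℕ => 1 - (1-t)^((1/4):ℝ) * (∑ k ∈ range (N+1), rr k * t^k))
        atTop (nhds 0) := squeeze_zero_norm (fun N => hbound N) hb0
    have := (tendsto_const_nhds (x := (1:ℝ))).sub h0
    simpa using this
  have hps2 : Tendsto (fun N : ℕ => (1-t)^((1/4):ℝ) * (∑ k ∈ range (N+1), rr k * t^k))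
      atTop (nhds ((1-t)^((1/4):ℝ) * L)) := by
    have h := hL.tendsto_sum_nat
    have h2 := h.comp (tendsto_add_atTop_nat 1)
    exact (h2.const_mul _)
  have heq : (1-t)^((1/4):ℝ) * L = 1 := tendsto_nhds_unique hps2 hps
  have hne : (1-t)^((1/4):ℝ) ≠ 0 := by positivity
  have hLval : L = (1-t)^(-(1/4):ℝ) := by
    rw [Real.rpow_neg h1t.le]
    field_simp at heq ⊢
    rw [show ((1:ℝ)-t)^((1/4):ℝ) * L = L * ((1:ℝ)-t)^((1/4):ℝ) from mul_comm _ _] at heq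
    linarith [mul_comm L (((1:ℝ)-t)^((1/4):ℝ))]
  exact hLval ▸ hL

/- ### Gauss evaluation of the sum of `aa` -/

lemma gamma_quarter (k : ℕ) :
    Real.Gamma ((k:ℝ) + 1/4) = rr k * (k.factorial : ℝ) * Real.Gamma (1/4) := by
  induction k with
  | zero => simp [rr]
  | succ k ih =>
      have hne : ((k:ℝ) + 1/4) ≠ 0 := by positivity
      have h1 : ((k+1:ℕ):ℝ) + 1/4 = ((k:ℝ) + 1/4) + 1 := by push_cast; ring
      rw [h1, Real.Gamma_add_one hne, ih, rr]
      rw [Nat.factorial_succ]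
      push_cast
      have h4 : (4*(k:ℝ)+4) ≠ 0 := by positivity
      field_simp

noncomputable def gg (k : ℕ) (x : ℝ) : ℝ := rr k * (x^((k:ℝ)-3/4) * (1-x)^(-(1/4):ℝ))

lemma gg_exp (k : ℕ) : ((k:ℝ) + 1/4) - 1 = (k:ℝ) - 3/4 := by ring

lemma gg_integrableOn (k : ℕ) : IntegrableOn (gg k) (Ioo (0:ℝ) 1) volume := by
  have h := (realBeta_integrable (s := (k:ℝ)+1/4) (t := 3/4) (by positivity) (by norm_num)).1
  rw [gg_exp] at h
  have h2 : IntegrableOn (fun x : ℝ => x^((k:ℝ)-3/4) * (1-x)^((3/4:ℝ)-1)) (Ioo 0 1) volume :=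
    h.mono_set Ioo_subset_Ioc_self
  have h3 : IntegrableOn (fun x : ℝ => rr k * (x^((k:ℝ)-3/4) * (1-x)^((3/4:ℝ)-1)))
      (Ioo 0 1) volume := by
    have := h2.const_mul (rr k)
    exact this
  apply h3.congr_fun ?_ measurableSet_Ioo
  intro x _
  simp only [gg]
  norm_num

lemma gg_integral (k : ℕ) :
    ∫ x in Ioo (0:ℝ) 1, gg k x = aa k * (Real.Gamma (1/4) * Real.Gamma (3/4)) := by
  have hb := realBeta (s := (k:ℝ)+1/4) (t := 3/4) (by positivity) (by norm_num)
  rw [gg_exp] at hb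
  have hconst : ∫ x in Ioo (0:ℝ) 1, gg k x
      = rr k * ∫ x in Ioo (0:ℝ) 1, x^((k:ℝ)-3/4) * (1-x)^((3/4:ℝ)-1) := by
    rw [← MeasureTheory.integral_const_mul]
    apply setIntegral_congr_fun measurableSet_Ioo
    intro x _
    simp only [gg]
    norm_num
  rw [hconst, ← integral_Ioc_eq_integral_Ioo,
    ← intervalIntegral.integral_of_le (by norm_num : (0:ℝ) ≤ 1), hb]
  rw [gamma_quarter k]
  have hfac : Real.Gamma ((k:ℝ)+1/4 + 3/4) = (k.factorial : ℝ) := by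
    rw [show (k:ℝ)+1/4+3/4 = (k:ℝ)+1 by ring]
    exact_mod_cast Real.Gamma_nat_eq_factorial k
  rw [hfac, aa]
  have : (k.factorial : ℝ) ≠ 0 := by exact_mod_cast k.factorial_ne_zero
  field_simp

lemma gg_nonneg {k : ℕ} {x : ℝ} (hx : x ∈ Ioo (0:ℝ) 1) : 0 ≤ gg k x := by
  obtain ⟨h0, h1⟩ := hx
  exact mul_nonneg (rr_pos k).le
    (mul_nonneg (Real.rpow_nonneg h0.le _) (Real.rpow_nonneg (by linarith) _))

lemma tsum_aa_val : ∑' k, aa k = Real.Gamma (1/2) / Real.Gamma (3/4)^2 := by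
  set μ := volume.restrict (Ioo (0:ℝ) 1) with hμ
  set C := Real.Gamma (1/4) * Real.Gamma (3/4) with hC
  have hΓ14 : 0 < Real.Gamma (1/4) := Real.Gamma_pos_of_pos (by norm_num)
  have hΓ34 : 0 < Real.Gamma (3/4) := Real.Gamma_pos_of_pos (by norm_num)
  have hΓ12 : 0 < Real.Gamma (1/2) := Real.Gamma_pos_of_pos (by norm_num)
  have stepA : ∀ k : ℕ, (∫⁻ x, ENNReal.ofReal (gg k x) ∂μ) = ENNReal.ofReal (aa k * C) := by
    intro k
    rw [← gg_integral k, ← MeasureTheory.ofReal_integral_eq_lintegral_ofReal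
      (gg_integrableOn k)]
    exact (ae_restrict_iff' measurableSet_Ioo).2 (ae_of_all _ fun x hx => gg_nonneg hx)
  have hmeas : ∀ k : ℕ, AEMeasurable (fun x => ENNReal.ofReal (gg k x)) μ := by
    intro k
    apply Measurable.aemeasurable
    apply Measurable.ennreal_ofReal
    unfold gg
    fun_prop
  have stepB := (MeasureTheory.lintegral_tsum hmeas).symm
  have stepC : ∀ x ∈ Ioo (0:ℝ) 1,
      (∑' k, ENNReal.ofReal (gg k x)) = ENNReal.ofReal (x^(-(3/4):ℝ) * (1-x)^(-(1/2):ℝ)) := by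
    intro x hx
    obtain ⟨h0, h1⟩ := hx
    have hbin := binom_hasSum h0.le h1
    have hc : HasSum (fun k => (rr k * x^k) * (x^(-(3/4):ℝ) * (1-x)^(-(1/4):ℝ)))
        ((1-x)^(-(1/4):ℝ) * (x^(-(3/4):ℝ) * (1-x)^(-(1/4):ℝ))) := hbin.mul_right _
    have heq : (fun k => (rr k * x^k) * (x^(-(3/4):ℝ) * (1-x)^(-(1/4):ℝ))) = fun k => gg k x := by
      funext k
      unfold gg
      rw [show ((k:ℝ) - 3/4) = (k:ℝ) + (-(3/4)) by ring, Real.rpow_add h0, Real.rpow_natCast]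
      ring
    have hval : (1-x)^(-(1/4):ℝ) * (x^(-(3/4):ℝ) * (1-x)^(-(1/4):ℝ))
        = x^(-(3/4):ℝ) * (1-x)^(-(1/2):ℝ) := by
      rw [show (-(1/2):ℝ) = (-(1/4)) + (-(1/4)) by norm_num,
        Real.rpow_add (by linarith : (0:ℝ) < 1 - x)]
      ring
    rw [heq, hval] at hc
    rw [← hc.tsum_eq]
    exact (ENNReal.ofReal_tsum_of_nonneg (fun k => gg_nonneg ⟨h0, h1⟩) hc.summable).symm
  have stepC' : ∫⁻ x, (∑' k, ENNReal.ofReal (gg k x)) ∂μ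
      = ∫⁻ x, ENNReal.ofReal (x^(-(3/4):ℝ) * (1-x)^(-(1/2):ℝ)) ∂μ := by
    rw [hμ]
    apply setLIntegral_congr_fun measurableSet_Ioo
    exact stepC
  have hDint : IntegrableOn (fun x : ℝ => x^(-(3/4):ℝ) * (1-x)^(-(1/2):ℝ)) (Ioo 0 1) volume := by
    have h := (realBeta_integrable (s := (1/4:ℝ)) (t := (1/2:ℝ)) (by norm_num) (by norm_num)).1
    have h2 := h.mono_set Ioo_subset_Ioc_self
    apply h2.congr_fun ?_ measurableSet_Ioo
    intro x _
    norm_num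
  have hDval : ∫ x in Ioo (0:ℝ) 1, x^(-(3/4):ℝ) * (1-x)^(-(1/2):ℝ)
      = Real.Gamma (1/4) * Real.Gamma (1/2) / Real.Gamma (3/4) := by
    have hb := realBeta (s := (1/4:ℝ)) (t := (1/2:ℝ)) (by norm_num) (by norm_num)
    rw [← integral_Ioc_eq_integral_Ioo, ← intervalIntegral.integral_of_le (by norm_num : (0:ℝ) ≤ 1)]
    rw [show Real.Gamma (1/4) * Real.Gamma (1/2) / Real.Gamma (3/4)
      = Real.Gamma (1/4) * Real.Gamma (1/2) / Real.Gamma (1/4 + 1/2) by norm_num]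
    rw [← hb]
    apply intervalIntegral.integral_congr
    intro x _
    norm_num
  have stepD : ∫⁻ x, ENNReal.ofReal (x^(-(3/4):ℝ) * (1-x)^(-(1/2):ℝ)) ∂μ
      = ENNReal.ofReal (Real.Gamma (1/4) * Real.Gamma (1/2) / Real.Gamma (3/4)) := by
    rw [← hDval, ← MeasureTheory.ofReal_integral_eq_lintegral_ofReal hDint]
    apply (ae_restrict_iff' measurableSet_Ioo).2
    apply ae_of_all
    intro x hx
    obtain ⟨h0, h1⟩ := hx
    exact mul_nonneg (Real.rpow_nonneg h0.le _) (Real.rpow_nonneg (by linarith) _)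
  have combined : (∑' k, ENNReal.ofReal (aa k * C))
      = ENNReal.ofReal (Real.Gamma (1/4) * Real.Gamma (1/2) / Real.Gamma (3/4)) := by
    calc (∑' k, ENNReal.ofReal (aa k * C)) = ∑' k, ∫⁻ x, ENNReal.ofReal (gg k x) ∂μ :=
          tsum_congr fun k => (stepA k).symm
      _ = ∫⁻ x, (∑' k, ENNReal.ofReal (gg k x)) ∂μ := stepB
      _ = ∫⁻ x, ENNReal.ofReal (x^(-(3/4):ℝ) * (1-x)^(-(1/2):ℝ)) ∂μ := stepC'
      _ = ENNReal.ofReal (Real.Gamma (1/4) * Real.Gamma (1/2) / Real.Gamma (3/4)) := stepD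
  have hsum2 : Summable (fun k => aa k * C) := summable_aa.mul_right C
  have hlhs : (∑' k, ENNReal.ofReal (aa k * C)) = ENNReal.ofReal ((∑' k, aa k) * C) := by
    rw [← tsum_mul_right]
    exact (ENNReal.ofReal_tsum_of_nonneg
      (fun k => mul_nonneg (aa_pos k).le (by positivity)) hsum2).symm
  rw [hlhs] at combined
  have hfin : (∑' k, aa k) * C = Real.Gamma (1/4) * Real.Gamma (1/2) / Real.Gamma (3/4) := by
    have h1 : 0 ≤ (∑' k, aa k) * C :=
      mul_nonneg (tsum_nonneg fun k => (aa_pos k).le) (by positivity)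
    have h2 : 0 ≤ Real.Gamma (1/4) * Real.Gamma (1/2) / Real.Gamma (3/4) := by positivity
    exact (ENNReal.ofReal_eq_ofReal_iff h1 h2).1 combined
  rw [hC] at hfin
  have hne14 : Real.Gamma (1/4) ≠ 0 := hΓ14.ne'
  have hne34 : Real.Gamma (3/4) ≠ 0 := hΓ34.ne'
  field_simp at hfin ⊢
  nlinarith [hfin]

/- ### Final assembly -/

theorem stmt_8 :
    ∑' n : ℕ, ((Nat.centralBinom n : ℝ) / 4 ^ n) ^ 3 =
      Real.Gamma (1 / 4) ^ 4 / (4 * Real.pi ^ 3) := by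
  have hΓ14 : 0 < Real.Gamma (1/4) := Real.Gamma_pos_of_pos (by norm_num)
  have hΓ34 : 0 < Real.Gamma (3/4) := Real.Gamma_pos_of_pos (by norm_num)
  have hπ : 0 < Real.pi := Real.pi_pos
  -- Cauchy product
  have hnorm : Summable (fun k => ‖aa k‖) := by
    have : (fun k => ‖aa k‖) = aa := by
      funext k; rw [Real.norm_eq_abs, abs_of_pos (aa_pos k)]
    rw [this]; exact summable_aa
  have hcauchy := tsum_mul_tsum_eq_tsum_sum_antidiagonal_of_summable_norm hnorm hnorm
  have hsum : ∑' n : ℕ, ((Nat.centralBinom n : ℝ) / 4 ^ n) ^ 3 = (∑' k, aa k)^2 := by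
    rw [sq, hcauchy]
    apply tsum_congr
    intro n
    rw [Finset.Nat.sum_antidiagonal_eq_sum_range_succ_mk]
    exact (clausen n).symm
  rw [hsum, tsum_aa_val]
  -- Gamma(1/2) = sqrt pi
  rw [Real.Gamma_one_half_eq]
  -- reflection: Gamma(1/4) * Gamma(3/4) = pi * sqrt 2
  have hrefl : Real.Gamma (1/4) * Real.Gamma (3/4) = Real.pi * Real.sqrt 2 := by
    have h := Real.Gamma_mul_Gamma_one_sub (1/4)
    rw [show (1:ℝ) - 1/4 = 3/4 by norm_num] at h
    rw [h, show Real.pi * (1/4 : ℝ) = Real.pi/4 by ring, Real.sin_pi_div_four]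
    have h2 : Real.sqrt 2 ≠ 0 := by positivity
    have h2' : Real.sqrt 2 * Real.sqrt 2 = 2 :=
      Real.mul_self_sqrt (by norm_num)
    field_simp
    nlinarith [h2']
  have hsq2 : Real.sqrt 2 * Real.sqrt 2 = 2 := Real.mul_self_sqrt (by norm_num)
  have hsqpi : Real.sqrt Real.pi * Real.sqrt Real.pi = Real.pi :=
    Real.mul_self_sqrt hπ.le
  have hquarter : Real.Gamma (1/4)^4 * Real.Gamma (3/4)^4 = 4 * Real.pi^4 := by
    have h24 : (Real.sqrt 2)^4 = 4 := by
      rw [show (Real.sqrt 2)^4 = (Real.sqrt 2 * Real.sqrt 2)^2 by ring, hsq2]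
      norm_num
    have := congrArg (fun x : ℝ => x^4) hrefl
    simp only [mul_pow] at this
    rw [h24] at this
    linarith [this]
  rw [show (1:ℝ)/4 = 1/4 by norm_num]
  have hne : Real.Gamma (3/4)^2 ≠ 0 := by positivity
  rw [div_pow] at *
  field_simp
  nlinarith [hquarter, hsqpi, hπ, pow_pos hΓ34 4, pow_pos hΓ14 4,
    (by rw [hsqpi]; ring : Real.sqrt Real.pi * Real.sqrt Real.pi * Real.pi^3 = Real.pi^4)]
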